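/- arXiv:2202.06822 — 2 statements merged into one kernel-verified Lean document; each statement's English description precedes it below -/
import Mathlib

section
/- Let p and q be distinct primes and k ≥ 1. Define L_{p,q,k} = C_{p,q,1} ∪ C_{p,q,2} ∪ ... ∪ C_{p,q,k} as a poset ordered by divisibility, where C_{p,q,1} = {1, p, q, p², pq, p²q} and C_{p,q,r} = {p^{r-1}q^r, p^r q^r, p^{r+1}q^r, p^{r+1}q^{r-1}} for r > 1. Then L_{p,q,k} is a lattice (with join = lcm and meet = gcd), i.e., it is closed under lcm and gcd. -/
/-- The blocks `C_{p,q,r}`. -/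
def Cpq (p q r : ℕ) : Set ℕ :=
  if r = 1 then {1, p, q, p ^ 2, p * q, p ^ 2 * q}
  else {p ^ (r - 1) * q ^ r, p ^ r * q ^ r, p ^ (r + 1) * q ^ r, p ^ (r + 1) * q ^ (r - 1)}

/-- The set `L_{p,q,k} = ⋃_{r=1}^k C_{p,q,r}`. -/
def Lpqk (p q k : ℕ) : Set ℕ := ⋃ r ∈ Set.Icc 1 k, Cpq p q r

/-- The predicate on exponent pairs describing membership in `L_{p,q,k}`. -/
def Ppred (k a b : ℕ) : Prop :=
  (b = 0 ∧ a ≤ 1) ∨ (1 ≤ b ∧ b ≤ k ∧ b - 1 ≤ a ∧ a ≤ b + 1) ∨ (a = b + 2 ∧ b + 1 ≤ k)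

lemma mem_Lpqk_iff (p q k : ℕ) (hk : 1 ≤ k) (x : ℕ) :
    x ∈ Lpqk p q k ↔ ∃ a b, Ppred k a b ∧ x = p ^ a * q ^ b := by
  constructor
  · intro hx
    simp only [Lpqk, Set.mem_iUnion, Set.mem_Icc] at hx
    obtain ⟨r, ⟨hr1, hrk⟩, hxr⟩ := hx
    by_cases h1 : r = 1
    · subst h1
      simp only [Cpq, if_pos rfl, Set.mem_insert_iff, Set.mem_singleton_iff] at hxr
      rcases hxr with h|h|h|h|h|h
      · exact ⟨0, 0, Or.inl ⟨rfl, by omega⟩, by simp [h]⟩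
      · exact ⟨1, 0, Or.inl ⟨rfl, by omega⟩, by simp [h]⟩
      · exact ⟨0, 1, Or.inr (Or.inl (by omega)), by simp [h]⟩
      · exact ⟨2, 0, Or.inr (Or.inr (by omega)), by simp [h]⟩
      · exact ⟨1, 1, Or.inr (Or.inl (by omega)), by simp [h]⟩
      · exact ⟨2, 1, Or.inr (Or.inl (by omega)), by simpa using h⟩
    · simp only [Cpq, if_neg h1, Set.mem_insert_iff, Set.mem_singleton_iff] at hxr
      rcases hxr with h|h|h|h
      · exact ⟨r - 1, r, Or.inr (Or.inl (by omega)), h⟩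
      · exact ⟨r, r, Or.inr (Or.inl (by omega)), h⟩
      · exact ⟨r + 1, r, Or.inr (Or.inl (by omega)), h⟩
      · exact ⟨r + 1, r - 1, Or.inr (Or.inr (by omega)), h⟩
  · rintro ⟨a, b, hP, rfl⟩
    simp only [Lpqk, Set.mem_iUnion, Set.mem_Icc]
    rcases hP with ⟨hb, ha⟩ | ⟨hb1, hbk, ha1, ha2⟩ | ⟨ha, hbk⟩
    · subst hb
      interval_cases a
      · exact ⟨1, ⟨le_refl 1, hk⟩, by simp [Cpq]⟩
      · exact ⟨1, ⟨le_refl 1, hk⟩, by simp [Cpq]⟩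
    · rcases eq_or_lt_of_le hb1 with h1 | h1
      · -- b = 1
        refine ⟨1, ⟨le_refl 1, hk⟩, ?_⟩
        subst h1
        have ha2' : a ≤ 2 := by omega
        interval_cases a <;> simp [Cpq]
      · -- b ≥ 2
        refine ⟨b, ⟨by omega, hbk⟩, ?_⟩
        have hb1' : ¬ b = 1 := by omega
        simp only [Cpq, if_neg hb1', Set.mem_insert_iff, Set.mem_singleton_iff]
        have : a = b - 1 ∨ a = b ∨ a = b + 1 := by omega
        rcases this with rfl | rfl | rfl
        · exact Or.inl rfl
        · exact Or.inr (Or.inl rfl)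
        · exact Or.inr (Or.inr (Or.inl rfl))
    · subst ha
      rcases Nat.eq_zero_or_pos b with rfl | hb
      · exact ⟨1, ⟨le_refl 1, hk⟩, by simp [Cpq]⟩
      · refine ⟨b + 1, ⟨by omega, hbk⟩, ?_⟩
        have hb1' : ¬ b + 1 = 1 := by omega
        simp only [Cpq, if_neg hb1', Set.mem_insert_iff, Set.mem_singleton_iff]
        exact Or.inr (Or.inr (Or.inr rfl))

lemma gcd_aux {p q : ℕ} (hp : p.Prime) (hq : q.Prime) (hpq : p ≠ q)
    {a b c d : ℕ} (hac : a ≤ c) (hdb : d ≤ b) :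
    Nat.gcd (p ^ a * q ^ b) (p ^ c * q ^ d) = p ^ a * q ^ d := by
  have h1 : p ^ a * q ^ b = p ^ a * q ^ d * q ^ (b - d) := by
    rw [mul_assoc, ← pow_add, Nat.add_sub_cancel' hdb]
  have h2 : p ^ c * q ^ d = p ^ a * q ^ d * p ^ (c - a) := by
    rw [show p ^ c = p ^ a * p ^ (c - a) by rw [← pow_add, Nat.add_sub_cancel' hac]]
    ring
  rw [h1, h2, Nat.gcd_mul_left]
  have hco : Nat.gcd (q ^ (b - d)) (p ^ (c - a)) = 1 :=
    (Nat.Coprime.pow (b - d) (c - a) ((Nat.coprime_primes hq hp).mpr (Ne.symm hpq)) : Nat.Coprime _ _)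
  rw [hco, mul_one]

lemma gcd_pow_mul_pow {p q : ℕ} (hp : p.Prime) (hq : q.Prime) (hpq : p ≠ q) (a b c d : ℕ) :
    Nat.gcd (p ^ a * q ^ b) (p ^ c * q ^ d) = p ^ min a c * q ^ min b d := by
  rcases le_total a c with hac | hac <;> rcases le_total b d with hbd | hbd
  · rw [min_eq_left hac, min_eq_left hbd,
      Nat.gcd_eq_left (mul_dvd_mul (pow_dvd_pow p hac) (pow_dvd_pow q hbd))]
  · rw [min_eq_left hac, min_eq_right hbd, gcd_aux hp hq hpq hac hbd]
  · rw [min_eq_right hac, min_eq_left hbd, Nat.gcd_comm, gcd_aux hp hq hpq hac hbd]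
  · rw [min_eq_right hac, min_eq_right hbd,
      Nat.gcd_eq_right (mul_dvd_mul (pow_dvd_pow p hac) (pow_dvd_pow q hbd))]

lemma lcm_pow_mul_pow {p q : ℕ} (hp : p.Prime) (hq : q.Prime) (hpq : p ≠ q) (a b c d : ℕ) :
    Nat.lcm (p ^ a * q ^ b) (p ^ c * q ^ d) = p ^ max a c * q ^ max b d := by
  have hg := Nat.gcd_mul_lcm (p ^ a * q ^ b) (p ^ c * q ^ d)
  rw [gcd_pow_mul_pow hp hq hpq] at hg
  have key : p ^ min a c * q ^ min b d * (p ^ max a c * q ^ max b d)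
      = p ^ a * q ^ b * (p ^ c * q ^ d) := by
    rw [mul_mul_mul_comm, ← pow_add, ← pow_add, min_add_max, min_add_max,
      pow_add, pow_add]
    ring
  have hpos : 0 < p ^ min a c * q ^ min b d :=
    Nat.mul_pos (pow_pos hp.pos _) (pow_pos hq.pos _)
  exact Nat.eq_of_mul_eq_mul_left hpos (by rw [hg, ← key])

lemma Ppred_closed {k a b c d : ℕ} (h1 : Ppred k a b) (h2 : Ppred k c d) :
    Ppred k (max a c) (max b d) ∧ Ppred k (min a c) (min b d) := by
  unfold Ppred at *
  omega

/-- for distinct primes `p, q` and `k ≥ 1`, the set `L_{p,q,k}` ordered by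
divisibility is a lattice: it is closed under `lcm` (join) and `gcd` (meet). -/
theorem Lpqk_closed_lcm_gcd (p q k : ℕ) (hp : p.Prime) (hq : q.Prime) (hpq : p ≠ q)
    (hk : 1 ≤ k) :
    ∀ x ∈ Lpqk p q k, ∀ y ∈ Lpqk p q k,
      Nat.lcm x y ∈ Lpqk p q k ∧ Nat.gcd x y ∈ Lpqk p q k := by
  intro x hx y hy
  obtain ⟨a, b, hab, rfl⟩ := (mem_Lpqk_iff p q k hk x).1 hx
  obtain ⟨c, d, hcd, rfl⟩ := (mem_Lpqk_iff p q k hk y).1 hy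
  constructor
  · rw [mem_Lpqk_iff p q k hk, lcm_pow_mul_pow hp hq hpq]
    exact ⟨max a c, max b d, (Ppred_closed hab hcd).1, rfl⟩
  · rw [mem_Lpqk_iff p q k hk, gcd_pow_mul_pow hp hq hpq]
    exact ⟨min a c, min b d, (Ppred_closed hab hcd).2, rfl⟩
end

section
/- Let K be a field and let I be an ideal of a polynomial ring S over K admitting a monomial order ≺ such that the initial ideal in_≺(I) is a squarefree monomial ideal. Then I is radical. -/
open MvPolynomial

section AuxSqfree

variable {σ : Type*} {r : (σ →₀ ℕ) → (σ →₀ ℕ) → Prop}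

private lemma auxSq_asymm (htrans : IsTrans (σ →₀ ℕ) r) (hirr : IsIrrefl (σ →₀ ℕ) r)
    {a b : σ →₀ ℕ} (h : r a b) : ¬ r b a := fun h' => hirr.irrefl a (htrans.trans _ _ _ h h')

private lemma auxSq_le (hadd : ∀ a b c : σ →₀ ℕ, r a b → r (a + c) (b + c))
    (hbot : ∀ a : σ →₀ ℕ, a ≠ 0 → r 0 a) {a b : σ →₀ ℕ} (h : a ≤ b) :
    a = b ∨ r a b := by
  obtain ⟨c, rfl⟩ := le_iff_exists_add.mp h
  rcases eq_or_ne c 0 with rfl | hc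
  · left; simp
  · right
    have := hadd 0 c a (hbot c hc)
    simpa [add_comm] using this

private lemma auxSq_wf [Finite σ]
    (htrans : IsTrans (σ →₀ ℕ) r) (hirr : IsIrrefl (σ →₀ ℕ) r)
    (hadd : ∀ a b c : σ →₀ ℕ, r a b → r (a + c) (b + c))
    (hbot : ∀ a : σ →₀ ℕ, a ≠ 0 → r 0 a) : WellFounded r := by
  haveI := htrans; haveI := hirr
  haveI : IsStrictOrder (σ →₀ ℕ) r := ⟨⟩
  rw [RelEmbedding.wellFounded_iff_isEmpty]
  constructor
  intro f
  obtain ⟨m, n, hmn, hle⟩ := (Set.isPWO_of_wellQuasiOrderedLE (Set.univ : Set (σ →₀ ℕ))).exists_lt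
    (f := fun k => f k) (fun k => Set.mem_univ _)
  have hr : r (f n) (f m) := f.map_rel_iff.mpr hmn
  rcases auxSq_le hadd hbot hle with h | h
  · rw [h] at hr; exact hirr.irrefl _ hr
  · exact auxSq_asymm htrans hirr h hr

private lemma auxSq_max (htri : IsTrichotomous (σ →₀ ℕ) r) (htrans : IsTrans (σ →₀ ℕ) r)
    (s : Finset (σ →₀ ℕ)) :
    s.Nonempty → ∃ d ∈ s, ∀ e ∈ s, e ≠ d → r e d := by
  classical
  induction s using Finset.induction_on with
  | empty => rintro ⟨x, hx⟩; simp at hx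
  | @insert a s ha ih =>
    intro _
    rcases s.eq_empty_or_nonempty with rfl | hs
    · exact ⟨a, by simp, by simp⟩
    · obtain ⟨d, hd, hmax⟩ := ih hs
      rcases (by rcases em (r a d) with h | h; exact Or.inl h; rcases em (r d a) with h' | h'; exact Or.inr (Or.inr h'); exact Or.inr (Or.inl (htri.trichotomous a d h h')) : r a d ∨ a = d ∨ r d a) with h | h | h
      · refine ⟨d, Finset.mem_insert_of_mem hd, ?_⟩
        intro e he hne
        rcases Finset.mem_insert.mp he with rfl | he'
        · exact h
        · exact hmax e he' hne
      · refine ⟨d, Finset.mem_insert_of_mem hd, ?_⟩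
        intro e he hne
        rcases Finset.mem_insert.mp he with rfl | he'
        · exact absurd h hne
        · exact hmax e he' hne
      · refine ⟨a, Finset.mem_insert_self a s, ?_⟩
        intro e he hne
        rcases Finset.mem_insert.mp he with rfl | he'
        · exact absurd rfl hne
        · rcases eq_or_ne e d with rfl | hne'
          · exact h
          · exact htrans.trans _ _ _ (hmax e he' hne') h

private lemma auxSq_add_rle (htrans : IsTrans (σ →₀ ℕ) r)
    (hadd : ∀ a b c : σ →₀ ℕ, r a b → r (a + c) (b + c))
    {u a v b : σ →₀ ℕ} (h1 : u = a ∨ r u a) (h2 : v = b ∨ r v b) :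
    u + v = a + b ∨ r (u + v) (a + b) := by
  rcases h1 with rfl | h1 <;> rcases h2 with rfl | h2
  · exact Or.inl rfl
  · right; have := hadd v b u h2; simpa [add_comm] using this
  · right; exact hadd u a v h1
  · right
    refine Or.elim (Or.inr (htrans.trans (u+v) (a+v) (a+b) (hadd u a v h1) ?_)) id id
    have := hadd v b a h2; simpa [add_comm] using this

end AuxSqfree

section Aux2
variable {σ : Type*} {r : (σ →₀ ℕ) → (σ →₀ ℕ) → Prop} {K : Type*} [Field K]

/-- `d` is the leading monomial of `f` w.r.t. `r`. -/
private def AuxLM (r : (σ →₀ ℕ) → (σ →₀ ℕ) → Prop) (f : MvPolynomial σ K) (d : σ →₀ ℕ) : Prop :=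
  d ∈ f.support ∧ ∀ e ∈ f.support, e ≠ d → r e d

private lemma auxSq_mul (htrans : IsTrans (σ →₀ ℕ) r) (hirr : IsIrrefl (σ →₀ ℕ) r)
    (hadd : ∀ a b c : σ →₀ ℕ, r a b → r (a + c) (b + c))
    {f g : MvPolynomial σ K} {a b : σ →₀ ℕ}
    (hf : AuxLM r f a) (hg : AuxLM r g b) :
    coeff (a + b) (f * g) = coeff a f * coeff b g ∧
      ∀ e ∈ (f * g).support, e = a + b ∨ r e (a + b) := by
  classical
  have hrle : ∀ {u a' v b' : σ →₀ ℕ}, (u = a' ∨ r u a') → (v = b' ∨ r v b') →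
      u + v = a' + b' ∨ r (u + v) (a' + b') := by
    intro u a' v b' h1 h2
    rcases h1 with rfl | h1 <;> rcases h2 with rfl | h2
    · exact Or.inl rfl
    · right; have := hadd v b' u h2; simpa [add_comm] using this
    · right; exact hadd u a' v h1
    · right
      refine htrans.trans (u+v) (a'+v) (a'+b') (hadd u a' v h1) ?_
      have := hadd v b' a' h2; simpa [add_comm] using this
  constructor
  · rw [coeff_mul]
    rw [Finset.sum_eq_single_of_mem (a, b) (Finset.HasAntidiagonal.mem_antidiagonal.mpr rfl)]
    intro x hx hne
    rcases eq_or_ne (coeff x.1 f) 0 with h1 | h1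
    · rw [h1, zero_mul]
    rcases eq_or_ne (coeff x.2 g) 0 with h2 | h2
    · rw [h2, mul_zero]
    exfalso
    have hx1 : x.1 ∈ f.support := mem_support_iff.mpr h1
    have hx2 : x.2 ∈ g.support := mem_support_iff.mpr h2
    have hsum : x.1 + x.2 = a + b := Finset.HasAntidiagonal.mem_antidiagonal.mp hx
    have h1' : x.1 = a ∨ r x.1 a := by
      rcases eq_or_ne x.1 a with h | h
      · exact Or.inl h
      · exact Or.inr (hf.2 _ hx1 h)
    have h2' : x.2 = b ∨ r x.2 b := by
      rcases eq_or_ne x.2 b with h | h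
      · exact Or.inl h
      · exact Or.inr (hg.2 _ hx2 h)
    rcases hrle h1' h2' with h | h
    · rcases h1' with h1'' | h1''
      · have : x.2 = b := by
          have := hsum; rw [h1''] at this; exact add_left_cancel this
        exact hne (Prod.ext h1'' this)
      · -- x.1 ≠ a, r x.1 a, but x.1 + x.2 = a + b; from hrle we got equality? derive contra
        -- h : x.1 + x.2 = a + b, fine. Need contradiction differently.
        -- rebuild: since r x.1 a, r (x.1+x.2) (a + x.2); and x.2 = b or r x.2 b...
        have hr1 : r (x.1 + x.2) (a + x.2) := hadd _ _ _ h1''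
        rcases h2' with rfl | h2''
        · rw [hsum] at hr1; exact hirr.irrefl _ hr1
        · have hr2 : r (a + x.2) (a + b) := by
            have := hadd x.2 b a h2''; simpa [add_comm] using this
          have := htrans.trans _ _ _ hr1 hr2
          rw [hsum] at this; exact hirr.irrefl _ this
    · rw [hsum] at h; exact hirr.irrefl _ h
  · intro e he
    have hsub := MvPolynomial.support_mul f g he
    obtain ⟨u, hu, v, hv, rfl⟩ := Finset.mem_add.mp hsub
    have h1' : u = a ∨ r u a := by
      rcases eq_or_ne u a with h | h
      · exact Or.inl h
      · exact Or.inr (hf.2 _ hu h)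
    have h2' : v = b ∨ r v b := by
      rcases eq_or_ne v b with h | h
      · exact Or.inl h
      · exact Or.inr (hg.2 _ hv h)
    exact hrle h1' h2'

private lemma auxSq_pow (htrans : IsTrans (σ →₀ ℕ) r) (hirr : IsIrrefl (σ →₀ ℕ) r)
    (hadd : ∀ a b c : σ →₀ ℕ, r a b → r (a + c) (b + c))
    {f : MvPolynomial σ K} {a : σ →₀ ℕ} (hf : AuxLM r f a) :
    ∀ n : ℕ, 1 ≤ n → AuxLM r (f ^ n) (n • a) := by
  intro n hn
  induction n, hn using Nat.le_induction with
  | base => simpa using hf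
  | succ n hn ih =>
    have key := auxSq_mul htrans hirr hadd ih hf
    have hc : coeff (n • a + a) (f ^ n * f) ≠ 0 := by
      rw [key.1]
      exact mul_ne_zero (mem_support_iff.mp ih.1) (mem_support_iff.mp hf.1)
    constructor
    · rw [succ_nsmul, pow_succ]
      exact mem_support_iff.mpr hc
    · intro e he hne
      rw [succ_nsmul]
      rw [pow_succ] at he
      rcases key.2 e he with h | h
      · exact absurd (by rw [h, succ_nsmul]) hne
      · exact h

end Aux2

/-- if an ideal `I` of a polynomial ring over a field admits a monomial
order (a linear order on exponent vectors, compatible with addition and with `0` as the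
least element) whose initial ideal is a squarefree monomial ideal, then `I` is radical.
The initial ideal is the ideal generated by the leading monomials of the nonzero elements
of `I`. -/
theorem radical_of_squarefree_initial_ideal (K : Type*) [Field K] (σ : Type*) [Finite σ]
    (r : (σ →₀ ℕ) → (σ →₀ ℕ) → Prop)
    (htri : IsTrichotomous (σ →₀ ℕ) r) (htrans : IsTrans (σ →₀ ℕ) r)
    (hirr : IsIrrefl (σ →₀ ℕ) r)
    (hadd : ∀ a b c : σ →₀ ℕ, r a b → r (a + c) (b + c))
    (hbot : ∀ a : σ →₀ ℕ, a ≠ 0 → r 0 a)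
    (I : Ideal (MvPolynomial σ K))
    (D : Set (σ →₀ ℕ)) (hD : ∀ d ∈ D, ∀ x : σ, d x ≤ 1)
    (hinit : Ideal.span {p : MvPolynomial σ K | ∃ f ∈ I, f ≠ 0 ∧
        ∃ d, (d ∈ f.support ∧ ∀ e ∈ f.support, e ≠ d → r e d) ∧ p = monomial d (1 : K)} =
      Ideal.span ((fun d => monomial d (1 : K)) '' D)) :
    I.IsRadical := by
  classical
  -- rewrite the initial ideal as a monomial ideal over an explicit exponent set
  set E : Set (σ →₀ ℕ) :=
    {d | ∃ f ∈ I, f ≠ 0 ∧ AuxLM r f d} with hE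
  have himg : {p : MvPolynomial σ K | ∃ f ∈ I, f ≠ 0 ∧
      ∃ d, (d ∈ f.support ∧ ∀ e ∈ f.support, e ≠ d → r e d) ∧ p = monomial d (1 : K)} =
      (fun d => monomial d (1 : K)) '' E := by
    ext p
    constructor
    · rintro ⟨f, hfI, hf0, d, hd, rfl⟩
      exact ⟨d, ⟨f, hfI, hf0, hd⟩, rfl⟩
    · rintro ⟨d, ⟨f, hfI, hf0, hd⟩, rfl⟩
      exact ⟨f, hfI, hf0, d, hd, rfl⟩
  rw [himg] at hinit
  have key : ∀ d : σ →₀ ℕ, ∀ f : MvPolynomial σ K, AuxLM r f d → f ∈ I.radical → f ∈ I := by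
    intro d
    induction d using (auxSq_wf htrans hirr hadd hbot).induction with
    | _ d IH =>
    intro f hLM hfr
    obtain ⟨n, hfn⟩ := hfr
    rcases eq_or_ne n 0 with rfl | hn
    · rw [pow_zero] at hfn
      exact (Ideal.eq_top_iff_one I).mpr hfn ▸ Submodule.mem_top
    have hfd : coeff d f ≠ 0 := mem_support_iff.mp hLM.1
    have hLMn : AuxLM r (f ^ n) (n • d) :=
      auxSq_pow htrans hirr hadd hLM n (Nat.one_le_iff_ne_zero.mpr hn)
    have hfn0 : f ^ n ≠ 0 := by
      intro h
      have := hLMn.1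
      rw [h] at this
      simp at this
    -- the leading monomial of f^n lies in the initial ideal
    have h1 : (monomial (n • d) (1 : K)) ∈
        Ideal.span ((fun d => monomial d (1 : K)) '' D) := by
      rw [← hinit]
      exact Ideal.subset_span ⟨n • d, ⟨f ^ n, hfn, hfn0, hLMn⟩, rfl⟩
    rw [mem_ideal_span_monomial_image] at h1
    obtain ⟨e, heD, hele⟩ := h1 (n • d) (by simp [support_monomial])
    -- squarefreeness: e ≤ d
    have hed : e ≤ d := by
      rw [Finsupp.le_def]
      intro x
      have h1x : e x ≤ n * d x := by
        have := Finsupp.le_def.mp hele x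
        simpa [Finsupp.smul_apply] using this
      rcases Nat.eq_zero_or_pos (d x) with hdx | hdx
      · simpa [hdx] using h1x
      · exact le_trans (hD e heD x) hdx
    -- hence x^d is in the initial ideal, so some leading monomial divides d
    have h2 : (monomial d (1 : K)) ∈ Ideal.span ((fun d => monomial d (1 : K)) '' E) := by
      rw [hinit, mem_ideal_span_monomial_image]
      intro xi hxi
      have : xi = d := by simpa [support_monomial] using hxi
      exact ⟨e, heD, this ▸ hed⟩
    rw [mem_ideal_span_monomial_image] at h2
    obtain ⟨c, hcE, hcd⟩ := h2 d (by simp [support_monomial])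
    obtain ⟨g, hgI, hg0, hgLM⟩ := hcE
    obtain ⟨u, rfl⟩ := le_iff_exists_add.mp hcd
    have hgc : coeff c g ≠ 0 := mem_support_iff.mp hgLM.1
    set c' : K := coeff (c + u) f / coeff c g with hc'
    set q : MvPolynomial σ K := monomial u c' * g with hq
    have hqI : q ∈ I := I.mul_mem_left _ hgI
    have hcoeffq : coeff (c + u) q = coeff (c + u) f := by
      have h := coeff_monomial_mul c u c' g
      rw [add_comm u c] at h
      rw [hq, h, hc', div_mul_cancel₀ _ hgc]
    rcases eq_or_ne (f - q) 0 with h0 | h0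
    · rw [sub_eq_zero.mp h0]
      exact hqI
    · -- f - q has a smaller leading monomial
      obtain ⟨d', hd'mem, hd'max⟩ := auxSq_max htri htrans (f - q).support
        (Finset.nonempty_iff_ne_empty.mpr (fun h => h0 (by rwa [← support_eq_empty])))
      have hd' : AuxLM r (f - q) d' := ⟨hd'mem, hd'max⟩
      have hc'0 : c' ≠ 0 := by
        rw [hc']
        exact div_ne_zero hfd hgc
      have hsubb : ∀ e' ∈ (f - q).support, e' = c + u ∨ r e' (c + u) := by
        intro e' he'
        have := MvPolynomial.support_sub σ f q he'
        rcases Finset.mem_union.mp this with hef | heq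
        · rcases eq_or_ne e' (c + u) with h | h
          · exact Or.inl h
          · exact Or.inr (hLM.2 _ hef h)
        · rw [hq] at heq
          have hsub := MvPolynomial.support_mul (monomial u c') g heq
          obtain ⟨p1, hp1, p2, hp2, rfl⟩ := Finset.mem_add.mp hsub
          have hp1u : p1 = u := by
            rw [support_monomial, if_neg hc'0] at hp1
            exact Finset.mem_singleton.mp hp1
          rcases eq_or_ne p2 c with rfl | hp2c
          · exact Or.inl (by rw [hp1u, add_comm])
          · right
            have h2 := hadd p2 c u (hgLM.2 _ hp2 hp2c)
            rw [hp1u, add_comm u p2]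
            exact h2
      have hd'd : r d' (c + u) := by
        have hne : d' ≠ c + u := by
          intro h
          apply mem_support_iff.mp hd'mem
          rw [h, coeff_sub, hcoeffq, sub_self]
        rcases hsubb d' hd'mem with h | h
        · exact absurd h hne
        · exact h
      have hfr' : f - q ∈ I.radical := Submodule.sub_mem _ ⟨n, hfn⟩ (Ideal.le_radical hqI)
      have hsubI : f - q ∈ I := IH d' hd'd (f - q) hd' hfr'
      have : f = (f - q) + q := by ring
      rw [this]
      exact Ideal.add_mem I hsubI hqI
  intro x hx
  rcases eq_or_ne x 0 with rfl | hx0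
  · exact I.zero_mem
  · obtain ⟨d, hd, hmax⟩ := auxSq_max htri htrans x.support
      (Finset.nonempty_iff_ne_empty.mpr (fun h => hx0 (by rwa [← support_eq_empty])))
    exact key d x ⟨hd, hmax⟩ hx
end
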